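/- Let ρ' be any 2×2 density matrix. Then there exist two incoherent 2×2 complex matrices K₀ and K₁ with K₀† K₀ + K₁† K₁ = I such that K₀ |+⟩⟨+| K₀† + K₁ |+⟩⟨+| K₁† = ρ', where |+⟩ = (|0⟩ + |1⟩)/√2. That is, the maximally coherent qubit state can be deterministically transformed into every qubit state by an incoherent operation with two Kraus operators. -/

import Mathlib

set_option maxHeartbeats 1000000


open Matrix
open scoped ComplexOrder

/-- A 2×2 complex matrix is incoherent if each of its columns has at most one
nonzero entry. -/
def Incoherent (K : Matrix (Fin 2) (Fin 2) ℂ) : Prop :=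
  ∀ j i i' : Fin 2, K i j ≠ 0 → K i' j ≠ 0 → i = i'

/-- The maximally coherent qubit state `|+⟩⟨+|` with `|+⟩ = (|0⟩ + |1⟩)/√2`. -/
noncomputable def maxCoherent : Matrix (Fin 2) (Fin 2) ℂ :=
  (1 / 2 : ℂ) • !![1, 1; 1, 1]

/-- The maximally coherent qubit state can be deterministically transformed into
every qubit state by an incoherent operation with two Kraus operators. -/
theorem max_coherent_reaches_all (ρ' : Matrix (Fin 2) (Fin 2) ℂ)
    (hρ' : ρ'.PosSemidef) (htr : ρ'.trace = 1) :
    ∃ K₀ K₁ : Matrix (Fin 2) (Fin 2) ℂ,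
      Incoherent K₀ ∧ Incoherent K₁ ∧ K₀ᴴ * K₀ + K₁ᴴ * K₁ = 1 ∧
      K₀ * maxCoherent * K₀ᴴ + K₁ * maxCoherent * K₁ᴴ = ρ' := by
  obtain ⟨hH, hQ⟩ := Matrix.posSemidef_iff_dotProduct_mulVec.mp hρ'
  set z : ℂ := ρ' 0 1 with hzdef
  set p : ℝ := (ρ' 0 0).re with hpdef
  have h00 : ρ' 0 0 = (p : ℂ) := (Complex.conj_eq_iff_re.mp (hH.apply 0 0)).symm
  have h10 : ρ' 1 0 = (starRingEnd ℂ) z := (hH.apply 1 0).symm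
  have h11 : ρ' 1 1 = 1 - (p : ℂ) := by
    rw [Matrix.trace_fin_two] at htr; linear_combination htr - h00
  have hp0 : 0 ≤ p := by
    have h := hQ ![1, 0]
    simp [dotProduct, Matrix.mulVec, Fin.sum_univ_two, h00] at h
    exact h
  have hp1 : p ≤ 1 := by
    have h := hQ ![0, 1]
    simp [dotProduct, Matrix.mulVec, Fin.sum_univ_two, h11] at h
    exact_mod_cast h
  have hD : 0 ≤ p * (1-p) - Complex.normSq z := by
    have hA := hQ ![-z, (p : ℂ)]
    have hB := hQ ![((1:ℂ) - p), -((starRingEnd ℂ) z)]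
    simp [dotProduct, Matrix.mulVec, Fin.sum_univ_two, h00, h10, h11] at hA hB
    rw [← hzdef] at hA hB
    have hA' : (0:ℂ) ≤ ((p * (p*(1-p) - Complex.normSq z) : ℝ) : ℂ) := by
      refine le_trans (le_of_eq ?_) (le_trans hA (le_of_eq ?_))
      · ring
      · push_cast
        linear_combination (-(p:ℂ)) * Complex.mul_conj z
    have hB' : (0:ℂ) ≤ (((1-p) * (p*(1-p) - Complex.normSq z) : ℝ) : ℂ) := by
      refine le_trans (le_of_eq ?_) (le_trans hB (le_of_eq ?_))
      · ring
      · push_cast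
        linear_combination (-(1-(p:ℂ))) * Complex.mul_conj z
    have hA'' := Complex.zero_le_real.mp hA'
    have hB'' := Complex.zero_le_real.mp hB'
    nlinarith [hA'', hB'']
  by_cases hz0 : z = 0
  · -- diagonal target state
    have hsp : ((Real.sqrt p : ℝ) : ℂ) * ↑(Real.sqrt p) = ↑p := by
      norm_cast; exact Real.mul_self_sqrt hp0
    have hsq : ((Real.sqrt (1-p) : ℝ) : ℂ) * ↑(Real.sqrt (1-p)) = 1 - ↑p := by
      rw [← Complex.ofReal_mul, Real.mul_self_sqrt (by linarith : (0:ℝ) ≤ 1 - p)]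
      push_cast; ring
    refine ⟨!![(Real.sqrt p : ℂ), 0; 0, -(Real.sqrt (1-p) : ℂ)],
            !![0, (Real.sqrt p : ℂ); (Real.sqrt (1-p) : ℂ), 0], ?_, ?_, ?_, ?_⟩
    · intro j i i' h1 h2; fin_cases j <;> fin_cases i <;> fin_cases i' <;> simp at h1 h2 ⊢
    · intro j i i' h1 h2; fin_cases j <;> fin_cases i <;> fin_cases i' <;> simp at h1 h2 ⊢
    · ext i j
      fin_cases i <;> fin_cases j <;>
        simp [Matrix.mul_apply, Fin.sum_univ_two, Matrix.conjTranspose_apply,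
          Matrix.vecMul, dotProduct, Matrix.vecHead, Matrix.vecTail,
          Matrix.one_apply, Complex.conj_ofReal] <;>
        first
        | linear_combination hsp + hsq | linear_combination hsp | linear_combination hsq
        | linear_combination -hsq | linear_combination -hsp | linear_combination hsp - hsq
        | linear_combination hsq - hsp | linear_combination -hsp - hsq
    · ext i j
      fin_cases i <;> fin_cases j <;>
        simp [Matrix.mul_apply, Fin.sum_univ_two, Matrix.conjTranspose_apply,
          Matrix.vecMul, dotProduct, Matrix.vecHead, Matrix.vecTail,
          maxCoherent, Complex.conj_ofReal, h00, h10, h11, ← hzdef, hz0] <;>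
        first
        | linear_combination hsp + hsq | linear_combination hsp | linear_combination hsq
        | linear_combination -hsq | linear_combination -hsp | linear_combination hsp - hsq
        | linear_combination hsq - hsp | linear_combination -hsp - hsq
  · -- nonzero off-diagonal entry
    have hns : 0 < Complex.normSq z := Complex.normSq_pos.mpr hz0
    have hp : 0 < p := by nlinarith
    have hq : 0 < 1 - p := by nlinarith
    set m : ℝ := ‖z‖ with hmdef
    set t : ℝ := Real.sqrt (p * (1-p) - Complex.normSq z) with htdef
    have hm0 : (m:ℂ) ≠ 0 := by simpa [hmdef] using hz0
    have hZ : z * (starRingEnd ℂ) z = (m:ℂ) * (m:ℂ) := by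
      rw [Complex.mul_conj]; norm_cast; rw [hmdef]
      rw [Complex.normSq_eq_norm_sq, sq]
    have hT : (t:ℂ) * (t:ℂ) = (p:ℂ) * (1 - (p:ℂ)) - (m:ℂ) * (m:ℂ) := by
      have h2 : m * m = Complex.normSq z := by rw [hmdef]; rw [Complex.normSq_eq_norm_sq, sq]
      rw [← Complex.ofReal_mul, Real.mul_self_sqrt hD, ← h2]; push_cast; ring
    have hsp : ((Real.sqrt p : ℝ):ℂ) * ↑(Real.sqrt p) = (p:ℂ) := by
      norm_cast; exact Real.mul_self_sqrt hp0
    have hsq : ((Real.sqrt (1-p) : ℝ):ℂ) * ↑(Real.sqrt (1-p)) = 1 - (p:ℂ) := by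
      rw [← Complex.ofReal_mul, Real.mul_self_sqrt hq.le]; push_cast; ring
    have hsp0 : ((Real.sqrt p : ℝ):ℂ) ≠ 0 := by simpa using (Real.sqrt_pos.mpr hp).ne'
    have hsq0 : ((Real.sqrt (1-p) : ℝ):ℂ) ≠ 0 := by simpa using (Real.sqrt_pos.mpr hq).ne'
    set c : ℂ := z * ((m:ℂ) + Complex.I * (t:ℂ)) / ((m:ℂ) * (Real.sqrt (1-p) : ℂ)) with hcdef
    set d : ℂ := (starRingEnd ℂ) z * ((m:ℂ) + Complex.I * (t:ℂ)) / ((m:ℂ) * (Real.sqrt p : ℂ))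
      with hddef
    have hstarc : (starRingEnd ℂ) c
        = (starRingEnd ℂ) z * ((m:ℂ) - Complex.I * (t:ℂ)) / ((m:ℂ) * (Real.sqrt (1-p) : ℂ)) := by
      rw [hcdef]; simp [map_div₀, Complex.conj_ofReal]; ring
    have hstard : (starRingEnd ℂ) d
        = z * ((m:ℂ) - Complex.I * (t:ℂ)) / ((m:ℂ) * (Real.sqrt p : ℂ)) := by
      rw [hddef]; simp [map_div₀, Complex.conj_ofReal]; ring
    have hcc : (starRingEnd ℂ) c * c = (p:ℂ) := by
      rw [hstarc, hcdef]
      field_simp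
      linear_combination (-(z * (starRingEnd ℂ) z * (t:ℂ) * (t:ℂ))) * Complex.I_sq
        + ((m:ℂ) * m + (t:ℂ) * t) * hZ + (m:ℂ) * m * hT - (p:ℂ) * ((m:ℂ) * m) * hsq
    have hdd : (starRingEnd ℂ) d * d = 1 - (p:ℂ) := by
      rw [hstard, hddef]
      field_simp
      linear_combination (-(z * (starRingEnd ℂ) z * (t:ℂ) * (t:ℂ))) * Complex.I_sq
        + ((m:ℂ) * m + (t:ℂ) * t) * hZ + (m:ℂ) * m * hT - (1 - (p:ℂ)) * ((m:ℂ) * m) * hsp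
    have hoff : (Real.sqrt p : ℂ) * (starRingEnd ℂ) d + c * (Real.sqrt (1-p) : ℂ) = 2 * z := by
      rw [hstard, hcdef]
      field_simp
      ring
    have hoff2 : d * (Real.sqrt p : ℂ) + (Real.sqrt (1-p) : ℂ) * (starRingEnd ℂ) c
        = 2 * (starRingEnd ℂ) z := by
      rw [hstarc, hddef]
      field_simp
      ring
    refine ⟨!![(Real.sqrt p : ℂ), 0; 0, d], !![0, c; (Real.sqrt (1-p) : ℂ), 0], ?_, ?_, ?_, ?_⟩
    · intro j i i' h1 h2; fin_cases j <;> fin_cases i <;> fin_cases i' <;> simp at h1 h2 ⊢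
    · intro j i i' h1 h2; fin_cases j <;> fin_cases i <;> fin_cases i' <;> simp at h1 h2 ⊢
    · ext i j
      fin_cases i <;> fin_cases j <;>
        simp [Matrix.mul_apply, Fin.sum_univ_two, Matrix.conjTranspose_apply,
          Matrix.vecMul, dotProduct, Matrix.vecHead, Matrix.vecTail,
          Matrix.one_apply, Complex.conj_ofReal] <;>
        first
        | linear_combination hsp + hsq
        | linear_combination hdd + hcc
        | linear_combination hcc + hdd
    · ext i j
      fin_cases i <;> fin_cases j <;>
        simp [Matrix.mul_apply, Fin.sum_univ_two, Matrix.conjTranspose_apply,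
          Matrix.vecMul, dotProduct, Matrix.vecHead, Matrix.vecTail,
          maxCoherent, Complex.conj_ofReal, h00, h10, h11, ← hzdef] <;>
        first
        | linear_combination hsp / 2 + hcc / 2
        | linear_combination hoff / 2
        | linear_combination hoff2 / 2
        | linear_combination hdd / 2 + hsq / 2
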